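/- The formal power series identity: Σ_{n≥0} p̄(n) q^n = (Σ_{n∈ℤ} (−1)^n q^{n²})^{−1} = Π_{n≥1} (1+q^n)/(1−q^n), where p̄(n) is the number of overpartitions of n. -/

import Mathlib

/-- The partition function `p(n)`. -/
def partitionCount (n : ℕ) : ℕ := Fintype.card (Nat.Partition n)

/-- The smallest part of a partition (`0` for the empty partition). -/
noncomputable def Nat.Partition.smallestPart {n : ℕ} (π : n.Partition) : ℕ := sInf {a | a ∈ π.parts}

/-- `spt(n)`: the total number of smallest parts in the partitions of `n`. -/
noncomputable def spt (n : ℕ) : ℕ := ∑ π : Nat.Partition n, π.parts.count π.smallestPart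

/-- The Kronecker symbol `(12 | m)`. -/
def chi12 (m : ℕ) : ℤ :=
  if m % 12 = 1 ∨ m % 12 = 11 then 1 else if m % 12 = 5 ∨ m % 12 = 7 then -1 else 0

/-- `a(n) = −∑_{ab = 6n, 0 < a < b} (12 | b² − a²) · a`. -/
def sptRHS (n : ℕ) : ℤ :=
  - ∑ a ∈ (6 * n).divisors.filter (fun a => a < 6 * n / a),
      chi12 ((6 * n / a) ^ 2 - a ^ 2) * a

/-- `s(k) = ∑_{d ∣ k} min(d, k/d)`. -/
def sdiv (k : ℕ) : ℕ := ∑ d ∈ k.divisors, min d (k / d)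

/-- `b(n)` from Theorem 2. -/
def bfun (n : ℕ) : ℤ :=
  if n % 2 = 1 then (-1) ^ (n + 1) * (2 * sdiv n)
  else if n % 4 = 0 then (-1) ^ (n + 1) * (4 * sdiv (n / 4))
  else 0

/-- The number of overpartitions of `n`: each partition together with a choice of
a set of part sizes to overline (the first occurrence of each chosen size). -/
def overpartitionCount (n : ℕ) : ℕ :=
  ∑ π : Nat.Partition n, π.parts.toFinset.powerset.card

/-- `sptbar(n)`: the number of odd smallest parts in the overpartitions of `n`. -/
noncomputable def sptbar (n : ℕ) : ℕ :=
  ∑ π : Nat.Partition n, ∑ _S ∈ π.parts.toFinset.powerset,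
    if Odd π.smallestPart then π.parts.count π.smallestPart else 0

/-- `M2(n)`: the number of partitions of `n` without repeated odd parts. -/
def M2 (n : ℕ) : ℕ :=
  (Finset.univ.filter fun π : Nat.Partition n =>
    ∀ i ∈ π.parts, Odd i → π.parts.count i ≤ 1).card

/-- `M2spt(n)`: the number of smallest parts in those partitions of `n` without
repeated odd parts whose smallest part is even. -/
noncomputable def M2spt (n : ℕ) : ℕ :=
  ∑ π : Nat.Partition n,
    if (∀ i ∈ π.parts, Odd i → π.parts.count i ≤ 1) ∧ Even π.smallestPart ∧ π.parts ≠ 0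
    then π.parts.count π.smallestPart else 0

/-- `σ(n)`: sum of divisors. -/
def sigma1 (n : ℕ) : ℕ := ∑ d ∈ n.divisors, d

/-- `c(n) = σ(n) − σ(n/2) − s(2n)/2 + s(n/2)`, with `σ`, `s` vanishing at non-integers. -/
def cfun (n : ℕ) : ℚ :=
  (sigma1 n : ℚ) - (if 2 ∣ n then (sigma1 (n / 2) : ℚ) else 0)
    - (sdiv (2 * n) : ℚ) / 2 + (if 2 ∣ n then (sdiv (n / 2) : ℚ) else 0)

/-- `p` extended by zero to `ℤ`. -/
def pZ (m : ℤ) : ℤ := if 0 ≤ m then (partitionCount m.toNat : ℤ) else 0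

/-- `spt` extended by zero to `ℤ`. -/
noncomputable def sptZ (m : ℤ) : ℤ := if 0 ≤ m then (spt m.toNat : ℤ) else 0

/-- `sptbar` extended by zero to `ℤ`. -/
noncomputable def sptbarZ (m : ℤ) : ℤ := if 0 ≤ m then (sptbar m.toNat : ℤ) else 0

/-- `M2spt` extended by zero to `ℤ`, valued in `ℚ`. -/
noncomputable def M2sptQ (m : ℤ) : ℚ := if 0 ≤ m then (M2spt m.toNat : ℚ) else 0



open PowerSeries Finset

noncomputable section OPAux

/-- Gaussian binomial coefficient in `q²` as a power series over `ℤ`. -/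
def gb : ℕ → ℕ → PowerSeries ℤ
  | _, 0 => 1
  | 0, _+1 => 0
  | (n+1), (k+1) => gb n (k+1) + X ^ (2*(n-k)) * gb n k

lemma gb_zero_right (n : ℕ) : gb n 0 = 1 := by cases n <;> rfl

lemma gb_succ_succ (n k : ℕ) :
    gb (n+1) (k+1) = gb n (k+1) + X ^ (2*(n-k)) * gb n k := rfl

lemma gb_eq_zero : ∀ {n k : ℕ}, n < k → gb n k = 0
  | 0, _+1, _ => rfl
  | n+1, k+1, h => by
      rw [gb_succ_succ, gb_eq_zero (by omega), gb_eq_zero (by omega), mul_zero, add_zero]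

lemma gb_self : ∀ n : ℕ, gb n n = 1
  | 0 => rfl
  | n+1 => by
      rw [gb_succ_succ, gb_eq_zero (by omega), gb_self n, zero_add, mul_one,
        Nat.sub_self, mul_zero, pow_zero]

/-- Product formula for Gaussian binomials. -/
lemma gb_prod : ∀ n k : ℕ, k ≤ n →
    gb n k * ∏ j ∈ Ioc 0 (n-k), (1 - (X : PowerSeries ℤ) ^ (2*j))
      = ∏ j ∈ Ioc k n, (1 - (X : PowerSeries ℤ) ^ (2*j))
  | n, 0, _ => by simp [gb_zero_right]
  | 0, k+1, h => by omega
  | n+1, k+1, h => by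
      rcases Nat.lt_or_ge (k+1) (n+1) with h' | h'
      · have hk : k + 1 ≤ n := by omega
        have hkn : k ≤ n := by omega
        obtain ⟨m, hm⟩ : ∃ m, n - k = m + 1 := ⟨n - k - 1, by omega⟩
        have h1 : n - (k+1) = m := by omega
        rw [gb_succ_succ, (by omega : n+1-(k+1) = m+1), (by omega : 2*(n-k) = 2*(m+1)),
          Finset.prod_Ioc_succ_top (Nat.zero_le m),
          Finset.prod_Ioc_succ_top (show k+1 ≤ n from hk)]
        have e1 : gb n (k+1) * ∏ j ∈ Ioc 0 m, (1 - (X : PowerSeries ℤ) ^ (2*j))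
            = ∏ j ∈ Ioc (k+1) n, (1 - (X : PowerSeries ℤ) ^ (2*j)) := by
          have := gb_prod n (k+1) hk; rwa [h1] at this
        have e2 : gb n k * ((∏ j ∈ Ioc 0 m, (1 - (X : PowerSeries ℤ) ^ (2*j))) * (1 - X ^ (2*(m+1))))
            = (1 - (X : PowerSeries ℤ) ^ (2*(k+1))) * ∏ j ∈ Ioc (k+1) n, (1 - X ^ (2*j)) := by
          have h3 := gb_prod n k hkn
          rw [hm, Finset.prod_Ioc_succ_top (Nat.zero_le m)] at h3
          rw [h3, ← Finset.prod_Ioc_consecutive _ (Nat.le_succ k) hk,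
            Nat.Ioc_succ_singleton, Finset.prod_singleton]
        have hx : (X : PowerSeries ℤ) ^ (2*(m+1)) * X ^ (2*(k+1)) = X ^ (2*(n+1)) := by
          rw [← pow_add]; congr 1; omega
        linear_combination (1 - (X : PowerSeries ℤ)^(2*(m+1))) * e1 + (X : PowerSeries ℤ)^(2*(m+1)) * e2
          - (∏ j ∈ Ioc (k+1) n, (1 - (X : PowerSeries ℤ) ^ (2*j))) * hx
      · have : k = n := by omega
        subst this
        simp [gb_self]

lemma prod_one_sub_X_ne_zero (t : Finset ℕ) (e : ℕ → ℕ) (he : ∀ j ∈ t, 0 < e j) :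
    (∏ j ∈ t, (1 - (X : PowerSeries ℤ) ^ (e j))) ≠ 0 := by
  apply Finset.prod_ne_zero_iff.mpr
  intro j hj h0
  have h1 : constantCoeff (1 - (X : PowerSeries ℤ) ^ (e j)) = 1 := by
    simp [zero_pow (he j hj).ne']
  rw [h0, map_zero] at h1
  exact one_ne_zero h1.symm

/-- Symmetry of Gaussian binomials. -/
lemma gb_symm {n k : ℕ} (h : k ≤ n) : gb n k = gb n (n - k) := by
  have h' : n - k ≤ n := by omega
  have e1 := gb_prod n k h
  have e2 := gb_prod n (n - k) h'
  rw [Nat.sub_sub_self h] at e2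
  have split1 : (∏ j ∈ Ioc 0 (n-k), (1 - (X : PowerSeries ℤ) ^ (2*j)))
      * (∏ j ∈ Ioc (n-k) n, (1 - (X : PowerSeries ℤ) ^ (2*j)))
      = ∏ j ∈ Ioc 0 n, (1 - (X : PowerSeries ℤ) ^ (2*j)) :=
    Finset.prod_Ioc_consecutive _ (Nat.zero_le _) h'
  have split2 : (∏ j ∈ Ioc 0 k, (1 - (X : PowerSeries ℤ) ^ (2*j)))
      * (∏ j ∈ Ioc k n, (1 - (X : PowerSeries ℤ) ^ (2*j)))
      = ∏ j ∈ Ioc 0 n, (1 - (X : PowerSeries ℤ) ^ (2*j)) :=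
    Finset.prod_Ioc_consecutive _ (Nat.zero_le _) h
  have key : gb n k * ∏ j ∈ Ioc 0 n, (1 - (X : PowerSeries ℤ) ^ (2*j))
      = gb n (n-k) * ∏ j ∈ Ioc 0 n, (1 - (X : PowerSeries ℤ) ^ (2*j)) := by
    linear_combination (∏ j ∈ Ioc (n-k) n, (1 - (X : PowerSeries ℤ) ^ (2*j))) * e1
      - (∏ j ∈ Ioc k n, (1 - (X : PowerSeries ℤ) ^ (2*j))) * e2
      - gb n k * split1 + gb n (n-k) * split2
  exact mul_right_cancel₀ (prod_one_sub_X_ne_zero _ _ (fun j hj => by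
    have := (Finset.mem_Ioc.mp hj).1; omega)) key

lemma qb_exp_eq (k m : ℕ) (h : k ≤ m) : (k+1)*k + 2*(m-k) = k*(k-1) + 2*m := by
  cases k with
  | zero => simp
  | succ j => simp only [Nat.succ_sub_one]; zify [h]; ring

/-- q-binomial theorem, in `ℤ⟦X⟧[z]`. -/
lemma QB2 (m : ℕ) :
    ∏ j ∈ range m, (Polynomial.C ((X : PowerSeries ℤ)^(2*j)) + Polynomial.X)
      = ∑ s ∈ range (m+1),
          Polynomial.X ^ (m - s) * Polynomial.C ((X : PowerSeries ℤ)^(s*(s-1)) * gb m s) := by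
  induction m with
  | zero => simp [gb_zero_right]
  | succ m ih =>
      rw [Finset.prod_range_succ, ih, mul_add, Finset.sum_mul, Finset.sum_mul]
      have hA : (∑ s ∈ range (m+1),
            Polynomial.X ^ (m - s) * Polynomial.C ((X : PowerSeries ℤ)^(s*(s-1)) * gb m s)
              * Polynomial.C ((X : PowerSeries ℤ)^(2*m)))
          = ∑ k ∈ range (m+1), Polynomial.X ^ (m - k)
              * Polynomial.C ((X : PowerSeries ℤ)^((k+1)*k) * ((X : PowerSeries ℤ)^(2*(m-k)) * gb m k)) := by
        apply Finset.sum_congr rfl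
        intro k hk
        have hk' : k ≤ m := by have := Finset.mem_range.mp hk; omega
        have h2 : (X : PowerSeries ℤ)^((k+1)*k) * ((X:PowerSeries ℤ)^(2*(m-k)) * gb m k)
            = (X:PowerSeries ℤ)^(k*(k-1)) * gb m k * (X:PowerSeries ℤ)^(2*m) := by
          rw [← mul_assoc, ← pow_add, qb_exp_eq k m hk', pow_add]; ring
        rw [mul_assoc, ← Polynomial.C_mul, h2]
      have hB : (∑ s ∈ range (m+1),
            Polynomial.X ^ (m - s) * Polynomial.C ((X : PowerSeries ℤ)^(s*(s-1)) * gb m s)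
              * Polynomial.X)
          = (∑ k ∈ range m, Polynomial.X ^ (m - k)
              * Polynomial.C ((X : PowerSeries ℤ)^((k+1)*k) * gb m (k+1)))
            + Polynomial.X ^ (m+1) := by
        have h3 : ∀ s ∈ range (m+1),
            Polynomial.X ^ (m - s) * Polynomial.C ((X : PowerSeries ℤ)^(s*(s-1)) * gb m s)
              * Polynomial.X
            = Polynomial.X ^ (m + 1 - s) * Polynomial.C ((X : PowerSeries ℤ)^(s*(s-1)) * gb m s) := by
          intro s hs
          rw [mul_comm _ Polynomial.X, ← mul_assoc, ← pow_succ']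
          have : m - s + 1 = m + 1 - s := by
            have := Finset.mem_range.mp hs; omega
          rw [this]
        rw [Finset.sum_congr rfl h3, Finset.sum_range_succ']
        simp only [Nat.succ_sub_succ, Nat.succ_sub_one, Nat.sub_zero, Nat.zero_mul, pow_zero,
          one_mul, gb_zero_right, mul_one, Polynomial.C_1]
      rw [hA, hB]
      have hT : ∀ k ∈ range (m+1),
          Polynomial.X ^ (m + 1 - (k+1))
            * Polynomial.C ((X : PowerSeries ℤ)^((k+1)*((k+1)-1)) * gb (m+1) (k+1))
          = Polynomial.X ^ (m - k)
              * Polynomial.C ((X : PowerSeries ℤ)^((k+1)*k) * gb m (k+1))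
            + Polynomial.X ^ (m - k)
              * Polynomial.C ((X : PowerSeries ℤ)^((k+1)*k) * ((X : PowerSeries ℤ)^(2*(m-k)) * gb m k)) := by
        intro k hk
        rw [gb_succ_succ, Nat.succ_sub_succ, Nat.succ_sub_one, mul_add, Polynomial.C_add, mul_add]
      have hRHS : (∑ s ∈ range (m+1+1),
            Polynomial.X ^ (m+1-s) * Polynomial.C ((X : PowerSeries ℤ)^(s*(s-1)) * gb (m+1) s))
          = ((∑ k ∈ range m, Polynomial.X ^ (m-k)
                * Polynomial.C ((X : PowerSeries ℤ)^((k+1)*k) * gb m (k+1)))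
              + ((∑ k ∈ range (m+1), Polynomial.X ^ (m-k)
                * Polynomial.C ((X : PowerSeries ℤ)^((k+1)*k) * ((X : PowerSeries ℤ)^(2*(m-k)) * gb m k)))
              + Polynomial.X ^ (m+1))) := by
        rw [Finset.sum_range_succ', Finset.sum_congr rfl hT, Finset.sum_add_distrib,
          Finset.sum_range_succ (fun k => Polynomial.X ^ (m-k)
            * Polynomial.C ((X : PowerSeries ℤ)^((k+1)*k) * gb m (k+1))) m,
          gb_eq_zero (show m < m+1 by omega)]
        simp only [mul_zero, Polynomial.C_0, add_zero, Nat.sub_self, pow_zero, one_mul,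
          Nat.sub_zero, Nat.zero_mul, gb_zero_right, mul_one, Polynomial.C_1]
        ring
      rw [hRHS]
      ring

/-- distance squared: `(s-n)²` as naturals. -/
def dsq (s n : ℕ) : ℕ := (s - n)^2 + (n - s)^2

lemma dsq_exp (s n : ℕ) (h : s ≤ 2*n) :
    (2*n-1)*(2*n-s) + s*(s-1) = dsq s n + (3*n^2-2*n) := by
  unfold dsq
  rcases Nat.eq_zero_or_pos n with hn | hn
  · subst hn; interval_cases s <;> simp
  rcases le_total s n with hs | hs
  · rw [Nat.sub_eq_zero_of_le hs]
    cases s with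
    | zero =>
        simp only [Nat.zero_sub, Nat.sub_zero]
        zify [show 1 ≤ 2*n by omega, show 2*n ≤ 3*n^2 by nlinarith]
        ring
    | succ j =>
        zify [show 1 ≤ 2*n by omega, show j+1 ≤ 2*n by omega, show j+1 ≤ n from hs,
          show 1 ≤ j+1 by omega, show 2*n ≤ 3*n^2 by nlinarith]
        ring
  · rw [Nat.sub_eq_zero_of_le hs]
    cases s with
    | zero => omega
    | succ j =>
        zify [show 1 ≤ 2*n by omega, show j+1 ≤ 2*n from h, show n ≤ j+1 from hs,
          show 1 ≤ j+1 by omega, show 2*n ≤ 3*n^2 by nlinarith]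
        ring

lemma neg_one_pow_sub_eq (a b : ℕ) (h : b ≤ a) : (-1:ℤ)^(a-b) = (-1)^(a+b) := by
  have h2 : a - b + 2*b = a + b := by omega
  calc (-1:ℤ)^(a-b) = (-1)^(a-b) * ((-1)^2)^b := by norm_num
    _ = (-1)^(a-b+2*b) := by rw [← pow_mul, ← pow_add]
    _ = (-1)^(a+b) := by rw [h2]

lemma eval_QB2 (n : ℕ) :
    ∏ j ∈ range (2*n), ((X : PowerSeries ℤ)^(2*j) - X^(2*n-1))
      = ∑ s ∈ range (2*n+1),
          (-(X : PowerSeries ℤ)^(2*n-1))^(2*n-s) * ((X : PowerSeries ℤ)^(s*(s-1)) * gb (2*n) s) := by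
  have h := congrArg (Polynomial.eval (-(X : PowerSeries ℤ)^(2*n-1))) (QB2 (2*n))
  simpa [Polynomial.eval_prod, Polynomial.eval_finset_sum, sub_eq_add_neg] using h

lemma prod_range_two_mul {M : Type*} [CommMonoid M] (n : ℕ) (f : ℕ → M) :
    ∏ j ∈ range (2*n), f j = ∏ j ∈ range n, (f j * f (2*n-1-j)) := by
  rw [Finset.prod_mul_distrib]
  rw [← Finset.prod_range_mul_prod_Ico f (show n ≤ 2*n by omega)]
  congr 1
  rw [Finset.prod_Ico_eq_prod_range]
  rw [← Finset.prod_range_reflect]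
  apply Finset.prod_congr (by congr 1; omega)
  intro j hj
  congr 1
  have := Finset.mem_range.mp hj
  omega

lemma pair_eq (n j : ℕ) (hj : j < n) :
    ((X : PowerSeries ℤ)^(2*j) - X^(2*n-1)) * ((X : PowerSeries ℤ)^(2*(2*n-1-j)) - X^(2*n-1))
      = -1 * ((X : PowerSeries ℤ)^(2*j) * (X : PowerSeries ℤ)^(2*n-1)
          * (1 - (X : PowerSeries ℤ)^(2*(n-j)-1))^2) := by
  have h1 : (X : PowerSeries ℤ)^(2*j) * (X : PowerSeries ℤ)^(2*(2*n-1-j))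
      = (X : PowerSeries ℤ)^(2*n-1) * (X : PowerSeries ℤ)^(2*n-1) := by
    rw [← pow_add, ← pow_add]; congr 1; omega
  have h2 : (X : PowerSeries ℤ)^(2*j) * (X : PowerSeries ℤ)^(2*(n-j)-1)
      = (X : PowerSeries ℤ)^(2*n-1) := by
    rw [← pow_add]; congr 1; omega
  have h3 : (X : PowerSeries ℤ)^(2*n-1) * (X : PowerSeries ℤ)^(2*(n-j)-1)
      = (X : PowerSeries ℤ)^(2*(2*n-1-j)) := by
    rw [← pow_add]; congr 1; omega
  linear_combination h1 + ((X : PowerSeries ℤ)^(2*n-1) * (X : PowerSeries ℤ)^(2*(n-j)-1)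
      - 2*(X : PowerSeries ℤ)^(2*n-1)) * h2 + (X : PowerSeries ℤ)^(2*n-1) * h3

lemma pairing (n : ℕ) :
    ∏ j ∈ range (2*n), ((X : PowerSeries ℤ)^(2*j) - X^(2*n-1))
      = PowerSeries.C ((-1)^n) * (X : PowerSeries ℤ)^(3*n^2-2*n)
          * ∏ i ∈ range n, (1 - (X : PowerSeries ℤ)^(2*i+1))^2 := by
  rw [prod_range_two_mul, Finset.prod_congr rfl (fun j hj => pair_eq n j (Finset.mem_range.mp hj))]
  rw [Finset.prod_mul_distrib, Finset.prod_mul_distrib, Finset.prod_mul_distrib]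
  rw [Finset.prod_const, Finset.prod_pow_eq_pow_sum, Finset.prod_pow_eq_pow_sum]
  have hsum : ∑ j ∈ range n, 2*j = n^2 - n := by
    induction n with
    | zero => simp
    | succ m ihm =>
        rw [Finset.sum_range_succ, ihm]
        zify [show m ≤ m^2 by nlinarith, show m+1 ≤ (m+1)^2 by nlinarith]
        ring
  have hsum2 : (∑ _j ∈ range n, (2*n-1)) = n*(2*n-1) := by
    rw [Finset.sum_const, smul_eq_mul, Finset.card_range]
  have hprod : ∏ j ∈ range n, (1 - (X : PowerSeries ℤ)^(2*(n-j)-1))^2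
      = ∏ i ∈ range n, (1 - (X : PowerSeries ℤ)^(2*i+1))^2 := by
    rw [← Finset.prod_range_reflect]
    apply Finset.prod_congr rfl
    intro j hj
    have := Finset.mem_range.mp hj
    congr 3
    omega
  rw [hsum, hsum2, hprod]
  have hX : (X : PowerSeries ℤ)^(n^2-n) * (X : PowerSeries ℤ)^(n*(2*n-1))
      = (X : PowerSeries ℤ)^(3*n^2-2*n) := by
    rw [← pow_add]; congr 1
    cases n with
    | zero => simp
    | succ m =>
        zify [show m+1 ≤ (m+1)^2 by nlinarith, show 1 ≤ 2*(m+1) by omega,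
          show 2*(m+1) ≤ 3*(m+1)^2 by nlinarith]
        ring
  have hC : ((-1 : PowerSeries ℤ))^n = PowerSeries.C ((-1)^n) := by
    rw [map_pow, map_neg, map_one]
  rw [← hX, ← hC, Finset.card_range]
  ring

/-- Finite Jacobi triple product at `z = -1`. -/
lemma JTP (n : ℕ) :
    ∑ s ∈ range (2*n+1),
        PowerSeries.C ((-1)^(s+n)) * ((X : PowerSeries ℤ)^(dsq s n) * gb (2*n) s)
      = ∏ i ∈ range n, (1 - (X : PowerSeries ℤ)^(2*i+1))^2 := by
  have hne : (PowerSeries.C ((-1)^n) * (X : PowerSeries ℤ)^(3*n^2-2*n)) ≠ 0 := by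
    apply mul_ne_zero
    · intro h
      have := congrArg (constantCoeff) h
      simp [PowerSeries.constantCoeff_C] at this
    · exact pow_ne_zero _ PowerSeries.X_ne_zero
  apply mul_left_cancel₀ hne
  rw [Finset.mul_sum]
  have hterm : ∀ s ∈ range (2*n+1),
      PowerSeries.C ((-1)^n) * (X : PowerSeries ℤ)^(3*n^2-2*n)
          * (PowerSeries.C ((-1)^(s+n)) * ((X : PowerSeries ℤ)^(dsq s n) * gb (2*n) s))
        = (-(X : PowerSeries ℤ)^(2*n-1))^(2*n-s) * ((X : PowerSeries ℤ)^(s*(s-1)) * gb (2*n) s) := by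
    intro s hs
    have hs' : s ≤ 2*n := by have := Finset.mem_range.mp hs; omega
    have e1 : (-(X : PowerSeries ℤ)^(2*n-1))^(2*n-s)
        = PowerSeries.C ((-1)^(2*n-s)) * (X : PowerSeries ℤ)^((2*n-1)*(2*n-s)) := by
      rw [neg_pow, ← pow_mul, map_pow, map_neg, map_one]
    have e2 : ((-1:ℤ))^(2*n-s) = (-1)^n * (-1)^(s+n) := by
      rw [neg_one_pow_sub_eq _ _ hs', ← pow_add]
      congr 1
      omega
    have e3 : (X : PowerSeries ℤ)^((2*n-1)*(2*n-s)) * (X : PowerSeries ℤ)^(s*(s-1))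
        = (X : PowerSeries ℤ)^(dsq s n) * (X : PowerSeries ℤ)^(3*n^2-2*n) := by
      rw [← pow_add, ← pow_add, dsq_exp s n hs']
    rw [e1, e2, map_mul]
    linear_combination (-(PowerSeries.C ((-1)^n) * PowerSeries.C ((-1)^(s+n)) * gb (2*n) s)) * e3
  rw [Finset.sum_congr rfl hterm, ← eval_QB2, pairing]


-- appended to jtp.lean content for testing
lemma mul_sub_one' {R : Type*} [CommRing R] (a b : R) : a*b - 1 = (a-1)*b + (b-1) := by ring

lemma dvd_one_sub_prod (c : ℕ) (t : Finset ℕ) (e : ℕ → ℕ) (h : ∀ j ∈ t, c ≤ e j) :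
    (X : PowerSeries ℤ)^c ∣ (∏ j ∈ t, (1 - X^(e j))) - 1 := by
  classical
  induction t using Finset.induction_on with
  | empty => simp
  | insert _ _ ha ih =>
      rename_i a t'
      rw [Finset.prod_insert ha, mul_sub_one']
      apply dvd_add
      · apply Dvd.dvd.mul_right
        have : (1 - (X : PowerSeries ℤ)^(e a)) - 1 = -(X^(e a)) := by ring
        rw [this, dvd_neg]
        exact pow_dvd_pow X (h a (Finset.mem_insert_self a t'))
      · exact ih (fun j hj => h j (Finset.mem_insert_of_mem hj))

lemma dsq_eq_of_ge {s N : ℕ} (h : N ≤ s) : dsq s N = (s-N)^2 := by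
  unfold dsq
  rw [Nat.sub_eq_zero_of_le h]
  ring

lemma dsq_symm {s N : ℕ} (h : s ≤ 2*N) : dsq (2*N - s) N = dsq s N := by
  unfold dsq
  rw [show 2*N - s - N = N - s by omega, show N - (2*N - s) = s - N by omega]
  ring

lemma gbE_high (N s : ℕ) (h : N ≤ s) (hs : s ≤ 2*N) :
    (X : PowerSeries ℤ)^(N+1) ∣
      (X : PowerSeries ℤ)^(dsq s N) * (gb (2*N) s * ∏ j ∈ Ioc 0 N, (1 - X^(2*j)))
        - X^(dsq s N) := by
  have hsplit : (∏ j ∈ Ioc 0 N, (1 - (X : PowerSeries ℤ)^(2*j)))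
      = (∏ j ∈ Ioc 0 (2*N-s), (1 - (X : PowerSeries ℤ)^(2*j)))
        * ∏ j ∈ Ioc (2*N-s) N, (1 - (X : PowerSeries ℤ)^(2*j)) :=
    (Finset.prod_Ioc_consecutive _ (Nat.zero_le _) (by omega)).symm
  have hgb := gb_prod (2*N) s hs
  have hE : gb (2*N) s * ∏ j ∈ Ioc 0 N, (1 - (X : PowerSeries ℤ)^(2*j))
      = (∏ j ∈ Ioc s (2*N), (1 - (X : PowerSeries ℤ)^(2*j)))
        * ∏ j ∈ Ioc (2*N-s) N, (1 - (X : PowerSeries ℤ)^(2*j)) := by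
    rw [hsplit, ← mul_assoc, hgb]
  rw [hE]
  set d := s - N with hd
  set c := 2*(N-d)+2 with hc
  have hAB : (X : PowerSeries ℤ)^c ∣
      (∏ j ∈ Ioc s (2*N), (1 - (X : PowerSeries ℤ)^(2*j)))
        * (∏ j ∈ Ioc (2*N-s) N, (1 - (X : PowerSeries ℤ)^(2*j))) - 1 := by
    rw [mul_sub_one']
    apply dvd_add
    · apply Dvd.dvd.mul_right
      apply dvd_one_sub_prod
      intro j hj
      have := (Finset.mem_Ioc.mp hj).1
      omega
    · apply dvd_one_sub_prod
      intro j hj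
      have := (Finset.mem_Ioc.mp hj).1
      omega
  have hle : N+1 ≤ dsq s N + c := by
    rw [dsq_eq_of_ge h, ← hd, hc]
    have hdN : d ≤ N := by omega
    nlinarith [sq_nonneg (d-1), Nat.sub_add_cancel hdN]
  calc (X : PowerSeries ℤ)^(N+1) ∣ X^(dsq s N + c) := pow_dvd_pow X hle
    _ ∣ X^(dsq s N) * ((∏ j ∈ Ioc s (2*N), (1 - (X : PowerSeries ℤ)^(2*j)))
          * (∏ j ∈ Ioc (2*N-s) N, (1 - (X : PowerSeries ℤ)^(2*j))) - 1) := by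
        rw [pow_add]
        exact mul_dvd_mul_left _ hAB
    _ = X^(dsq s N) * ((∏ j ∈ Ioc s (2*N), (1 - (X : PowerSeries ℤ)^(2*j)))
          * (∏ j ∈ Ioc (2*N-s) N, (1 - (X : PowerSeries ℤ)^(2*j)))) - X^(dsq s N) := by
        ring

lemma gbE_dvd (N s : ℕ) (hs : s ≤ 2*N) :
    (X : PowerSeries ℤ)^(N+1) ∣
      (X : PowerSeries ℤ)^(dsq s N) * (gb (2*N) s * ∏ j ∈ Ioc 0 N, (1 - X^(2*j)))
        - X^(dsq s N) := by
  rcases le_or_gt N s with h | h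
  · exact gbE_high N s h hs
  · have e := gbE_high N (2*N - s) (by omega) (by omega)
    rw [dsq_symm hs, gb_symm (show 2*N - s ≤ 2*N by omega), show 2*N - (2*N - s) = s by omega] at e
    exact e

/-- Truncated Gauss congruence: `θ_N ≡ E_N · P_N²  (mod X^{N+1})`. -/
lemma theta_cong (N : ℕ) :
    (X : PowerSeries ℤ)^(N+1) ∣
      (∑ s ∈ range (2*N+1), PowerSeries.C ((-1)^(s+N)) * (X : PowerSeries ℤ)^(dsq s N))
      - (∏ j ∈ Ioc 0 N, (1 - (X : PowerSeries ℤ)^(2*j)))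
          * ∏ i ∈ range N, (1 - (X : PowerSeries ℤ)^(2*i+1))^2 := by
  rw [← JTP N, Finset.mul_sum, ← Finset.sum_sub_distrib]
  apply Finset.dvd_sum
  intro s hs
  have hs' : s ≤ 2*N := by have := Finset.mem_range.mp hs; omega
  have key := gbE_dvd N s hs'
  have : PowerSeries.C ((-1)^(s+N)) * (X : PowerSeries ℤ)^(dsq s N)
      - (∏ j ∈ Ioc 0 N, (1 - (X : PowerSeries ℤ)^(2*j)))
          * (PowerSeries.C ((-1)^(s+N)) * ((X : PowerSeries ℤ)^(dsq s N) * gb (2*N) s))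
      = (- PowerSeries.C ((-1)^(s+N)))
          * ((X : PowerSeries ℤ)^(dsq s N) * (gb (2*N) s * ∏ j ∈ Ioc 0 N, (1 - X^(2*j)))
              - X^(dsq s N)) := by ring
  rw [this]
  exact Dvd.dvd.mul_left key _

lemma int_sq_toNat (s N : ℕ) : ((((s:ℤ) - N)^2).toNat) = dsq s N := by
  rcases le_total N s with h | h
  · have h1 : (s:ℤ) - N = ((s - N : ℕ) : ℤ) := by push_cast [h]; ring
    rw [h1, ← Nat.cast_pow, Int.toNat_natCast, dsq_eq_of_ge h]
  · have h1 : ((s:ℤ) - N)^2 = ((N - s : ℕ) : ℤ)^2 := by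
      rw [show (s:ℤ) - N = -(((N:ℤ) - s)) by ring, neg_sq]
      congr 1
      push_cast [h]
      ring
    rw [h1, ← Nat.cast_pow, Int.toNat_natCast]
    unfold dsq
    rw [Nat.sub_eq_zero_of_le h]
    ring

lemma negOnePow_eq (s N : ℕ) : ((((s:ℤ) - N).negOnePow : ℤ)) = (-1)^(s+N) := by
  rw [Int.negOnePow_sub]
  push_cast [Int.coe_negOnePow_natCast]
  rw [← pow_add]

lemma theta_reindex (N : ℕ) :
    (∑ k ∈ Finset.Icc (-(N:ℤ)) (N:ℤ),
        PowerSeries.C (k.negOnePow : ℤ) * (X : PowerSeries ℤ) ^ (k^2).toNat)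
    = ∑ s ∈ range (2*N+1), PowerSeries.C ((-1)^(s+N)) * (X : PowerSeries ℤ)^(dsq s N) := by
  apply Finset.sum_nbij' (fun (k : ℤ) => (k + N).toNat) (fun (s : ℕ) => (s : ℤ) - N)
  · intro k hk
    rw [Finset.mem_Icc] at hk
    rw [Finset.mem_range]
    omega
  · intro s hs
    rw [Finset.mem_range] at hs
    rw [Finset.mem_Icc]
    omega
  · intro k hk
    rw [Finset.mem_Icc] at hk
    omega
  · intro s hs
    rw [Finset.mem_range] at hs
    omega
  · intro k hk
    rw [Finset.mem_Icc] at hk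
    have hk' : k = ((((k + N).toNat : ℕ) : ℤ)) - N := by omega
    rw [← int_sq_toNat ((k+N).toNat) N, ← negOnePow_eq ((k+N).toNat) N, ← hk']

/-- odd times even product split -/
lemma prod_split (N : ℕ) :
    (∏ i ∈ range N, (1 - (X : PowerSeries ℤ)^(2*i+1)))
      * (∏ j ∈ Ioc 0 N, (1 - (X : PowerSeries ℤ)^(2*j)))
    = ∏ m ∈ Ioc 0 (2*N), (1 - (X : PowerSeries ℤ)^m) := by
  induction N with
  | zero => simp
  | succ n ih =>
      rw [Finset.prod_range_succ, Finset.prod_Ioc_succ_top (Nat.zero_le n),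
        show 2*(n+1) = 2*n+1+1 by omega,
        Finset.prod_Ioc_succ_top (Nat.zero_le (2*n+1)),
        Finset.prod_Ioc_succ_top (Nat.zero_le (2*n))]
      calc (∏ i ∈ range n, (1 - (X : PowerSeries ℤ)^(2*i+1))) * (1 - X^(2*n+1))
            * ((∏ j ∈ Ioc 0 n, (1 - (X : PowerSeries ℤ)^(2*j))) * (1 - X^(2*n+1+1)))
          = ((∏ i ∈ range n, (1 - (X : PowerSeries ℤ)^(2*i+1)))
              * ∏ j ∈ Ioc 0 n, (1 - (X : PowerSeries ℤ)^(2*j)))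
            * (1 - X^(2*n+1)) * (1 - X^(2*n+1+1)) := by ring
        _ = (∏ m ∈ Ioc 0 (2*n), (1 - (X : PowerSeries ℤ)^m))
            * (1 - X^(2*n+1)) * (1 - X^(2*n+1+1)) := by rw [ih]

lemma Icc_one_eq_Ioc (N : ℕ) : Finset.Icc 1 N = Finset.Ioc 0 N := by
  ext x
  simp [Nat.lt_iff_add_one_le]

lemma prod_plus_mul_minus (N : ℕ) :
    (∏ i ∈ Icc 1 N, (1 + (X : PowerSeries ℤ)^i))
      * (∏ i ∈ Icc 1 N, (1 - (X : PowerSeries ℤ)^i))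
    = ∏ j ∈ Ioc 0 N, (1 - (X : PowerSeries ℤ)^(2*j)) := by
  rw [Icc_one_eq_Ioc, ← Finset.prod_mul_distrib]
  apply Finset.prod_congr rfl
  intro i _
  have h : (X : PowerSeries ℤ)^i * X^i = X^(2*i) := by rw [← pow_add]; congr 1; omega
  linear_combination -h

/-- The Gauss congruence: `θ_N · ∏(1+Xⁱ) ≡ ∏(1-Xⁱ)  (mod X^{N+1})`. -/
lemma gauss_main (N : ℕ) :
    (X : PowerSeries ℤ)^(N+1) ∣
      (∑ k ∈ Finset.Icc (-(N:ℤ)) (N:ℤ),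
          PowerSeries.C (k.negOnePow : ℤ) * (X : PowerSeries ℤ) ^ (k^2).toNat)
        * (∏ i ∈ Icc 1 N, (1 + (X : PowerSeries ℤ)^i))
      - ∏ i ∈ Icc 1 N, (1 - (X : PowerSeries ℤ)^i) := by
  rw [theta_reindex]
  set θ := ∑ s ∈ range (2*N+1), PowerSeries.C ((-1)^(s+N)) * (X : PowerSeries ℤ)^(dsq s N) with hθ
  set E := ∏ j ∈ Ioc 0 N, (1 - (X : PowerSeries ℤ)^(2*j)) with hE
  set P := ∏ i ∈ range N, (1 - (X : PowerSeries ℤ)^(2*i+1)) with hP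
  set Q := ∏ i ∈ Icc 1 N, (1 + (X : PowerSeries ℤ)^i) with hQ
  set D := ∏ i ∈ Icc 1 N, (1 - (X : PowerSeries ℤ)^i) with hD
  set J := ∏ m ∈ Ioc N (2*N), (1 - (X : PowerSeries ℤ)^m) with hJ
  have hPE : P * E = D * J := by
    rw [hP, hE, prod_split, hD, hJ, Icc_one_eq_Ioc, Finset.prod_Ioc_consecutive _ (Nat.zero_le N) (by omega)]
  have hQD : Q * D = E := prod_plus_mul_minus N
  have h1 : (X : PowerSeries ℤ)^(N+1) ∣ θ - E * P^2 := by
    rw [hθ, hE, hP, ← Finset.prod_pow]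
    exact theta_cong N
  have hJ1 : (X : PowerSeries ℤ)^(N+1) ∣ J - 1 := by
    apply dvd_one_sub_prod
    intro j hj
    have := (Finset.mem_Ioc.mp hj).1
    omega
  have h2 : E * P^2 * Q - D = D * ((J*J - 1)) := by
    have e : E * P^2 * Q = D * (J * J) := by
      calc E * P^2 * Q = (P*E) * (P * Q) := by ring
        _ = (D*J) * (P*Q) := by rw [hPE]
        _ = J * ((Q*D) * P) := by ring
        _ = J * (E * P) := by rw [hQD]
        _ = J * ((P*E)) := by ring
        _ = J * (D*J) := by rw [hPE]
        _ = D * (J*J) := by ring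
    rw [e]; ring
  have h3 : (X : PowerSeries ℤ)^(N+1) ∣ E * P^2 * Q - D := by
    rw [h2]
    have : J*J - 1 = (J-1)*J + (J-1) := by ring
    rw [this]
    exact Dvd.dvd.mul_left (dvd_add (hJ1.mul_right J) hJ1) D
  have final : θ * Q - D = (θ - E*P^2) * Q + (E*P^2*Q - D) := by ring
  rw [final]
  exact dvd_add (h1.mul_right Q) h3

lemma coeff_eq_of_dvd {a b : PowerSeries ℤ} {N : ℕ} (h : (X : PowerSeries ℤ)^(N+1) ∣ a - b) :
    (PowerSeries.coeff N) a = (PowerSeries.coeff N) b := by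
  have := PowerSeries.X_pow_dvd_iff.mp h N (by omega)
  rw [map_sub, sub_eq_zero] at this
  exact this

lemma coeff_mul_left_congr {f f' g : PowerSeries ℤ} {N : ℕ}
    (h : ∀ i ≤ N, (PowerSeries.coeff i) f = (PowerSeries.coeff i) f') :
    (PowerSeries.coeff N) (f * g) = (PowerSeries.coeff N) (f' * g) := by
  rw [PowerSeries.coeff_mul, PowerSeries.coeff_mul]
  apply Finset.sum_congr rfl
  intro p hp
  rw [h p.1 (by have := Finset.HasAntidiagonal.mem_antidiagonal.mp hp; omega)]

lemma count_repl_sum (s : Finset ℕ) (c : ℕ → ℕ) (a : ℕ) :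
    Multiset.count a (∑ i ∈ s, Multiset.replicate (c i) i) = if a ∈ s then c a else 0 := by
  rw [Multiset.count_sum']
  simp only [Multiset.count_replicate]
  rw [Finset.sum_ite_eq' s a c]

lemma sum_repl_sum (s : Finset ℕ) (c : ℕ → ℕ) :
    (∑ i ∈ s, Multiset.replicate (c i) i).sum = ∑ i ∈ s, c i * i := by
  classical
  induction s using Finset.induction_on with
  | empty => simp
  | insert _ _ ha ih =>
      rename_i a t
      rw [Finset.sum_insert ha, Finset.sum_insert ha, Multiset.sum_add, ih,
        Multiset.sum_replicate, smul_eq_mul]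

/-- Weighted generating function for partitions with parts in `s`. -/
theorem WGF (n : ℕ) (s : Finset ℕ) (hs : ∀ i ∈ s, 0 < i) (w : ℕ → ℕ → ℤ) :
    (PowerSeries.coeff n) (∏ i ∈ s, PowerSeries.mk fun m => if i ∣ m then w i (m / i) else 0)
      = ∑ p ∈ Finset.univ.filter (fun p : n.Partition => ∀ j ∈ p.parts, j ∈ s),
          ∏ i ∈ s, w i (p.parts.count i) := by
  rw [PowerSeries.coeff_prod]
  rw [← Finset.sum_subset
    (Finset.filter_subset (fun ℓ => ∀ i ∈ s, i ∣ ℓ i) (Finset.finsuppAntidiag s n))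
    (fun ℓ hℓ hnl => by
      have hgoodn : ¬ ∀ i ∈ s, i ∣ ℓ i := fun hg => hnl (Finset.mem_filter.mpr ⟨hℓ, hg⟩)
      push_neg at hgoodn
      obtain ⟨i, hi, hnd⟩ := hgoodn
      exact Finset.prod_eq_zero hi (by rw [PowerSeries.coeff_mk, if_neg hnd]))]
  refine Finset.sum_bij'
    (i := fun ℓ hℓ =>
      ⟨∑ i ∈ s, Multiset.replicate (ℓ i / i) i,
       fun {a} ha => by
         obtain ⟨i, hi, hai⟩ := Multiset.mem_sum.mp ha
         rw [Multiset.eq_of_mem_replicate hai]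
         exact hs i hi,
       by
         obtain ⟨hmem, hgood⟩ := Finset.mem_filter.mp hℓ
         obtain ⟨hsum, hsupp⟩ := Finset.mem_finsuppAntidiag.mp hmem
         rw [sum_repl_sum]
         rw [← hsum]
         apply Finset.sum_congr rfl
         intro i hi
         exact Nat.div_mul_cancel (hgood i hi)⟩)
    (j := fun p hp =>
      Finsupp.onFinset s (fun i => p.parts.count i * i) (fun a ha => by
        have ha' : p.parts.count a * a ≠ 0 := ha
        have hc : a ∈ p.parts := Multiset.count_ne_zero.mp
          (fun h0 => ha' (by rw [h0, zero_mul]))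
        exact (Finset.mem_filter.mp hp).2 a hc))
    ?_ ?_ ?_ ?_ ?_
  · -- maps into partition filter
    intro ℓ hℓ
    rw [Finset.mem_filter]
    refine ⟨Finset.mem_univ _, ?_⟩
    intro j hj
    obtain ⟨i, hi, hai⟩ := Multiset.mem_sum.mp hj
    rw [Multiset.eq_of_mem_replicate hai]
    exact hi
  · -- maps into finsupp filter
    intro p hp
    rw [Finset.mem_filter]
    constructor
    · rw [Finset.mem_finsuppAntidiag]
      constructor
      · have hsub : p.parts.toFinset ⊆ s := by
          intro a ha
          exact (Finset.mem_filter.mp hp).2 a (Multiset.mem_toFinset.mp ha)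
        have hms := Finset.sum_multiset_count_of_subset p.parts s hsub
        simp only [smul_eq_mul] at hms
        trans (∑ i ∈ s, p.parts.count i * i)
        · exact Finset.sum_congr rfl (fun i _ => Finsupp.onFinset_apply)
        · rw [← hms, p.parts_sum]
      · exact Finsupp.support_onFinset_subset
    · intro i hi
      show i ∣ p.parts.count i * i
      exact Dvd.intro_left _ rfl
  · -- left inverse
    intro ℓ hℓ
    obtain ⟨hmem, hgood⟩ := Finset.mem_filter.mp hℓ
    obtain ⟨hsum, hsupp⟩ := Finset.mem_finsuppAntidiag.mp hmem
    apply Finsupp.ext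
    intro a
    show (Multiset.count a (∑ i ∈ s, Multiset.replicate (ℓ i / i) i)) * a = ℓ a
    rw [count_repl_sum]
    by_cases ha : a ∈ s
    · rw [if_pos ha]
      exact Nat.div_mul_cancel (hgood a ha)
    · rw [if_neg ha, zero_mul]
      symm
      exact Finsupp.notMem_support_iff.mp (fun h => ha (hsupp h))
  · -- right inverse
    intro p hp
    apply Nat.Partition.ext
    show (∑ i ∈ s, Multiset.replicate (p.parts.count i * i / i) i) = p.parts
    have hcongr : ∀ i ∈ s, Multiset.replicate (p.parts.count i * i / i) i
        = p.parts.count i • ({i} : Multiset ℕ) := by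
      intro i hi
      rw [Nat.mul_div_cancel _ (hs i hi), Multiset.nsmul_singleton]
    rw [Finset.sum_congr rfl hcongr]
    have hsub : p.parts.toFinset ⊆ s := by
      intro a ha
      exact (Finset.mem_filter.mp hp).2 a (Multiset.mem_toFinset.mp ha)
    rw [← Finset.sum_subset hsub (fun x _ hx => by
      rw [Multiset.count_eq_zero_of_notMem (fun hm => hx (Multiset.mem_toFinset.mpr hm)),
        zero_smul])]
    exact Multiset.toFinset_sum_count_nsmul_eq p.parts
  · -- values
    intro ℓ hℓ
    obtain ⟨hmem, hgood⟩ := Finset.mem_filter.mp hℓ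
    refine Finset.prod_congr rfl fun i hi => ?_
    rw [PowerSeries.coeff_mk, if_pos (hgood i hi)]
    show w i (ℓ i / i) = w i (Multiset.count i (∑ i ∈ s, Multiset.replicate (ℓ i / i) i))
    rw [count_repl_sum, if_pos hi]

def Iser (i : ℕ) : PowerSeries ℤ := PowerSeries.mk fun m => if i ∣ m then 1 else 0

def Oser (i : ℕ) : PowerSeries ℤ :=
  PowerSeries.mk fun m => if i ∣ m then (if m / i = 0 then 1 else 2) else 0

lemma I_mul (i : ℕ) (hi : 0 < i) : Iser i * (1 - (X : PowerSeries ℤ)^i) = 1 := by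
  apply PowerSeries.ext
  intro m
  rw [mul_sub, mul_one, map_sub, PowerSeries.coeff_mul_X_pow']
  simp only [Iser, PowerSeries.coeff_mk, PowerSeries.coeff_one]
  rcases Nat.eq_zero_or_pos m with rfl | hm
  · simp [show ¬ i ≤ 0 by omega]
  · have hmne : m ≠ 0 := by omega
    by_cases him : i ≤ m
    · have hiff : i ∣ m ↔ i ∣ m - i := ⟨fun h => Nat.dvd_sub h dvd_rfl, fun h => by
        have hh : m - i + i = m := by omega
        rw [← hh]; exact Nat.dvd_add h dvd_rfl⟩
      by_cases hd : i ∣ m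
      · simp [him, hd, hiff.mp hd, hmne]
      · have hdi : ¬ i ∣ m - i := fun h => hd (hiff.mpr h)
        simp [him, hd, hdi, hmne]
    · have hd : ¬ i ∣ m := fun h => him (Nat.le_of_dvd hm h)
      simp [him, hd, hmne]

lemma O_eq (i : ℕ) (hi : 0 < i) : Oser i = (1 + (X : PowerSeries ℤ)^i) * Iser i := by
  apply PowerSeries.ext
  intro m
  rw [mul_comm, mul_add, mul_one, map_add, PowerSeries.coeff_mul_X_pow']
  simp only [Oser, Iser, PowerSeries.coeff_mk]
  rcases Nat.eq_zero_or_pos m with rfl | hm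
  · simp [show ¬ i ≤ 0 by omega]
  · by_cases hd : i ∣ m
    · have him := Nat.le_of_dvd hm hd
      have hdi : i ∣ m - i := Nat.dvd_sub hd dvd_rfl
      have hq : m / i ≠ 0 := by
        intro h0
        have := Nat.div_mul_cancel hd
        rw [h0, zero_mul] at this
        omega
      norm_num [hd, him, hdi, hq]
    · by_cases him : i ≤ m
      · have hdi : ¬ i ∣ m - i := fun h => hd (by
          have hh : m - i + i = m := by omega
          rw [← hh]; exact Nat.dvd_add h dvd_rfl)
        simp [hd, him, hdi]
      · simp [hd, him]

lemma overpartition_coeff (N n : ℕ) (hn : n ≤ N) :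
    (PowerSeries.coeff n) (∏ i ∈ Icc 1 N, Oser i) = (overpartitionCount n : ℤ) := by
  have hOser : ∀ i : ℕ, Oser i
      = PowerSeries.mk fun m => if i ∣ m then
          (fun k => if k = 0 then (1:ℤ) else 2) (m / i) else 0 := fun i => rfl
  calc (PowerSeries.coeff n) (∏ i ∈ Icc 1 N, Oser i)
      = ∑ p ∈ Finset.univ.filter (fun p : n.Partition => ∀ j ∈ p.parts, j ∈ Icc 1 N),
          ∏ i ∈ Icc 1 N, (if p.parts.count i = 0 then (1:ℤ) else 2) := by
        rw [Finset.prod_congr rfl (fun i _ => hOser i)]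
        exact WGF n (Icc 1 N) (fun i hi => by
          have := (Finset.mem_Icc.mp hi).1; omega) (fun i k => if k = 0 then 1 else 2)
    _ = ∑ p : n.Partition, ∏ i ∈ Icc 1 N, (if p.parts.count i = 0 then (1:ℤ) else 2) := by
        apply Finset.sum_congr _ (fun _ _ => rfl)
        apply Finset.filter_true_of_mem
        intro p _
        intro j hj
        rw [Finset.mem_Icc]
        constructor
        · exact p.parts_pos hj
        · obtain ⟨t, ht⟩ := Multiset.exists_cons_of_mem hj
          have hps := p.parts_sum
          rw [ht, Multiset.sum_cons] at hps
          omega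
    _ = (overpartitionCount n : ℤ) := by
        rw [overpartitionCount]
        push_cast
        apply Finset.sum_congr rfl
        intro p _
        have hsub : p.parts.toFinset ⊆ Icc 1 N := by
          intro a ha
          have ha' := Multiset.mem_toFinset.mp ha
          rw [Finset.mem_Icc]
          constructor
          · exact p.parts_pos ha'
          · obtain ⟨t, ht⟩ := Multiset.exists_cons_of_mem ha'
            have hps := p.parts_sum
            rw [ht, Multiset.sum_cons] at hps
            omega
        rw [Finset.card_powerset]
        rw [← Finset.prod_subset hsub (fun x _ hx => by
          rw [if_pos (Multiset.count_eq_zero_of_notMem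
            (fun hm => hx (Multiset.mem_toFinset.mpr hm)))])]
        rw [Finset.prod_congr rfl (fun x hx => by
          rw [if_neg (by
            have := Multiset.mem_toFinset.mp hx
            exact Multiset.count_ne_zero.mpr this)] : ∀ x ∈ p.parts.toFinset,
            (if p.parts.count x = 0 then (1:ℤ) else 2) = 2)]
        rw [Finset.prod_const]
        push_cast
        ring
end OPAux

open PowerSeries in
/-- The overpartition generating function: `∑ p̄(n) q^n = (∑_{n∈ℤ} (−1)^n q^{n²})⁻¹
= ∏_{n≥1} (1+q^n)/(1−q^n)`, stated coefficientwise with truncations. -/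
theorem overpartition_generating_function (N : ℕ) :
    coeff N ((mk fun n => (overpartitionCount n : ℤ))
          * ∑ k ∈ Finset.Icc (-(N : ℤ)) (N : ℤ),
              C (k.negOnePow : ℤ) * (X : PowerSeries ℤ) ^ (k ^ 2).toNat)
        = (if N = 0 then 1 else 0)
      ∧ coeff N ((mk fun n => (overpartitionCount n : ℤ))
          * ∏ n ∈ Finset.Icc 1 N, (1 - (X : PowerSeries ℤ) ^ n))
        = coeff N (∏ n ∈ Finset.Icc 1 N, (1 + (X : PowerSeries ℤ) ^ n)) := by
  
  have hagree : ∀ i ≤ N, (coeff i) (mk fun n => (overpartitionCount n : ℤ))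
      = (coeff i) (∏ j ∈ Finset.Icc 1 N, Oser j) := fun i hi => by
    rw [PowerSeries.coeff_mk, overpartition_coeff N i hi]
  have hpos : ∀ i ∈ Finset.Icc 1 N, 0 < i := fun i hi => by
    have := (Finset.mem_Icc.mp hi).1; omega
  have hF : (∏ j ∈ Finset.Icc 1 N, Oser j)
      = (∏ j ∈ Finset.Icc 1 N, (1 + (X : PowerSeries ℤ)^j))
        * ∏ j ∈ Finset.Icc 1 N, Iser j := by
    rw [← Finset.prod_mul_distrib]
    exact Finset.prod_congr rfl fun i hi => O_eq i (hpos i hi)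
  have hID : (∏ j ∈ Finset.Icc 1 N, Iser j)
      * (∏ j ∈ Finset.Icc 1 N, (1 - (X : PowerSeries ℤ)^j)) = 1 := by
    rw [← Finset.prod_mul_distrib]
    rw [Finset.prod_congr rfl (fun i hi => I_mul i (hpos i hi))]
    exact Finset.prod_const_one
  constructor
  · rw [coeff_mul_left_congr hagree, hF]
    have hre : (∏ j ∈ Finset.Icc 1 N, (1 + (X : PowerSeries ℤ)^j))
          * (∏ j ∈ Finset.Icc 1 N, Iser j)
        * (∑ k ∈ Finset.Icc (-(N:ℤ)) (N:ℤ),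
            C (k.negOnePow : ℤ) * (X : PowerSeries ℤ)^(k^2).toNat)
        = (∏ j ∈ Finset.Icc 1 N, Iser j)
          * ((∑ k ∈ Finset.Icc (-(N:ℤ)) (N:ℤ),
              C (k.negOnePow : ℤ) * (X : PowerSeries ℤ)^(k^2).toNat)
            * ∏ j ∈ Finset.Icc 1 N, (1 + (X : PowerSeries ℤ)^j)) := by ring
    rw [hre]
    have hdvd : (X : PowerSeries ℤ)^(N+1) ∣
        (∏ j ∈ Finset.Icc 1 N, Iser j)
          * ((∑ k ∈ Finset.Icc (-(N:ℤ)) (N:ℤ),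
              C (k.negOnePow : ℤ) * (X : PowerSeries ℤ)^(k^2).toNat)
            * ∏ j ∈ Finset.Icc 1 N, (1 + (X : PowerSeries ℤ)^j)) - 1 := by
      have h1 := gauss_main N
      have hsplit : (∏ j ∈ Finset.Icc 1 N, Iser j)
            * ((∑ k ∈ Finset.Icc (-(N:ℤ)) (N:ℤ),
                C (k.negOnePow : ℤ) * (X : PowerSeries ℤ)^(k^2).toNat)
              * ∏ j ∈ Finset.Icc 1 N, (1 + (X : PowerSeries ℤ)^j)) - 1
          = (∏ j ∈ Finset.Icc 1 N, Iser j)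
              * ((∑ k ∈ Finset.Icc (-(N:ℤ)) (N:ℤ),
                  C (k.negOnePow : ℤ) * (X : PowerSeries ℤ)^(k^2).toNat)
                  * (∏ j ∈ Finset.Icc 1 N, (1 + (X : PowerSeries ℤ)^j))
                - ∏ j ∈ Finset.Icc 1 N, (1 - (X : PowerSeries ℤ)^j))
            + ((∏ j ∈ Finset.Icc 1 N, Iser j)
                * (∏ j ∈ Finset.Icc 1 N, (1 - (X : PowerSeries ℤ)^j)) - 1) := by ring
      rw [hsplit, hID, sub_self, add_zero]
      exact Dvd.dvd.mul_left h1 _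
    rw [coeff_eq_of_dvd hdvd, PowerSeries.coeff_one]
  · rw [coeff_mul_left_congr hagree, hF]
    have hre : (∏ j ∈ Finset.Icc 1 N, (1 + (X : PowerSeries ℤ)^j))
          * (∏ j ∈ Finset.Icc 1 N, Iser j)
        * (∏ j ∈ Finset.Icc 1 N, (1 - (X : PowerSeries ℤ)^j))
        = (∏ j ∈ Finset.Icc 1 N, (1 + (X : PowerSeries ℤ)^j))
          * ((∏ j ∈ Finset.Icc 1 N, Iser j)
            * ∏ j ∈ Finset.Icc 1 N, (1 - (X : PowerSeries ℤ)^j)) := by ring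
    rw [hre, hID, mul_one]
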